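/- Let N be an M-matrix (entrywise nonnegative inverse, nonpositive off-diagonals). Then ρ((I − N)(N + I)⁻¹) < 1, i.e., the spectral radius of (I − N)(N + I)⁻¹ is less than 1. -/

import Mathlib

open scoped ENNReal
open Matrix Finset Polynomial

section Aux

variable {n : ℕ}

lemma mulNonneg {P Q : Matrix (Fin n) (Fin n) ℝ} (hP : ∀ i j, 0 ≤ P i j)
    (hQ : ∀ i j, 0 ≤ Q i j) : ∀ i j, 0 ≤ (P * Q) i j := by
  intro i j
  rw [Matrix.mul_apply]
  exact Finset.sum_nonneg fun k _ => mul_nonneg (hP i k) (hQ k j)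

lemma powNonneg {T : Matrix (Fin n) (Fin n) ℝ} (hT : ∀ i j, 0 ≤ T i j) (k : ℕ) :
    ∀ i j, 0 ≤ (T ^ k) i j := by
  induction k with
  | zero => intro i j; simp [Matrix.one_apply]; split <;> norm_num
  | succ k ih => rw [pow_succ]; exact mulNonneg ih hT

lemma cmapMul (P Q : Matrix (Fin n) (Fin n) ℝ) :
    ((P * Q).map (Complex.ofReal ·)) = P.map (Complex.ofReal ·) * Q.map (Complex.ofReal ·) := by
  ext i j
  simp [Matrix.mul_apply, Matrix.map_apply]

lemma cmapOne : ((1 : Matrix (Fin n) (Fin n) ℝ).map (Complex.ofReal ·)) = 1 := by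
  ext i j
  simp [Matrix.map_apply, Matrix.one_apply]
  split <;> simp

lemma cmapPow (T : Matrix (Fin n) (Fin n) ℝ) (k : ℕ) :
    ((T ^ k).map (Complex.ofReal ·)) = (T.map (Complex.ofReal ·)) ^ k := by
  induction k with
  | zero => simpa using cmapOne
  | succ k ih => rw [pow_succ, cmapMul, ih, pow_succ]

lemma mapInv {M : Matrix (Fin n) (Fin n) ℝ} (h : IsUnit M) :
    (M⁻¹).map (Complex.ofReal ·) = (M.map (Complex.ofReal ·))⁻¹ := by
  have hd : IsUnit M.det := (Matrix.isUnit_iff_isUnit_det M).mp h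
  refine (Matrix.inv_eq_left_inv ?_).symm
  rw [← cmapMul, Matrix.nonsing_inv_mul M hd, cmapOne]


lemma key (N : Matrix (Fin n) (Fin n) ℝ) (hNunit : IsUnit N)
    (hNinv : ∀ i j, 0 ≤ N⁻¹ i j) (hoff : ∀ i j, i ≠ j → N i j ≤ 0) :
    ∀ lam ∈ spectrum ℂ (N.map (Complex.ofReal ·)), 0 < lam.re := by
  intro lam hlam
  set s : ℝ := 1 + ∑ i, max (N i i) 0 with hs_def
  have hsum_nonneg : 0 ≤ ∑ i, max (N i i) 0 :=
    Finset.sum_nonneg fun i _ => le_max_right _ _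
  have hs : 0 < s := by positivity
  have hsd : ∀ i, N i i ≤ s := by
    intro i
    calc N i i ≤ max (N i i) 0 := le_max_left _ _
    _ ≤ ∑ j, max (N j j) 0 :=
        Finset.single_le_sum (f := fun j => max (N j j) 0) (fun j _ => le_max_right _ _) (mem_univ i)
    _ ≤ s := by rw [hs_def]; linarith
  set T : Matrix (Fin n) (Fin n) ℝ := 1 - s⁻¹ • N with hT_def
  have hT : ∀ i j, 0 ≤ T i j := by
    intro i j
    by_cases h : i = j
    · subst h
      simp only [hT_def, Matrix.sub_apply, Matrix.one_apply_eq, Matrix.smul_apply, smul_eq_mul]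
      have hss : s⁻¹ * s = 1 := by field_simp
      have : s⁻¹ * N i i ≤ 1 := by
        calc s⁻¹ * N i i ≤ s⁻¹ * s := mul_le_mul_of_nonneg_left (hsd i) (by positivity)
        _ = 1 := hss
      linarith
    · simp only [hT_def, Matrix.sub_apply, Matrix.one_apply_ne h, Matrix.smul_apply, smul_eq_mul]
      have := hoff i j h
      nlinarith [inv_pos.mpr hs]
  have hdet : IsUnit N.det := (Matrix.isUnit_iff_isUnit_det N).mp hNunit
  have hTA : T * N⁻¹ = N⁻¹ - s⁻¹ • (1 : Matrix (Fin n) (Fin n) ℝ) := by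
    rw [hT_def, sub_mul, one_mul, Matrix.smul_mul, Matrix.mul_nonsing_inv N hdet]
  -- partial sums identity
  have hps : ∀ k : ℕ, (∑ m ∈ Finset.range k, s⁻¹ • T ^ m) = N⁻¹ - T ^ k * N⁻¹ := by
    intro k
    induction k with
    | zero => simp
    | succ k ih =>
      rw [Finset.sum_range_succ, ih, pow_succ, mul_assoc, hTA, mul_sub,
        Matrix.mul_smul, mul_one]
      abel
  -- entrywise partial-sum bound
  have hbound : ∀ (i j : Fin n) (k : ℕ),
      (∑ m ∈ Finset.range k, (T ^ m) i j) ≤ s * N⁻¹ i j := by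
    intro i j k
    have h1 : (∑ m ∈ Finset.range k, s⁻¹ • T ^ m) i j ≤ N⁻¹ i j := by
      rw [hps k]
      have := mulNonneg (powNonneg hT k) hNinv i j
      simp only [Matrix.sub_apply]
      linarith
    have h2 : (∑ m ∈ Finset.range k, s⁻¹ • T ^ m) i j
        = s⁻¹ * ∑ m ∈ Finset.range k, (T ^ m) i j := by
      rw [Matrix.sum_apply, Finset.mul_sum]
      exact Finset.sum_congr rfl fun m _ => by
        simp [Matrix.smul_apply]
    rw [h2] at h1
    calc (∑ m ∈ Finset.range k, (T ^ m) i j) = s * (s⁻¹ * ∑ m ∈ Finset.range k, (T ^ m) i j) := by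
          field_simp
    _ ≤ s * N⁻¹ i j := by nlinarith
  -- entries of T^m tend to zero
  have hto0 : ∀ i j : Fin n, Filter.Tendsto (fun m => (T ^ m) i j) Filter.atTop (nhds 0) := by
    intro i j
    have hsummable : Summable (fun m => (T ^ m) i j) :=
      summable_of_sum_range_le (fun m => powNonneg hT m i j) (hbound i j)
    exact hsummable.tendsto_atTop_zero
  -- move to ℂ
  set Nc := N.map (Complex.ofReal ·) with hNc_def
  have hlam' : ¬ IsUnit ((algebraMap ℂ (Matrix (Fin n) (Fin n) ℂ)) lam - Nc) :=
    spectrum.mem_iff.mp hlam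
  have hdet0 : ((algebraMap ℂ (Matrix (Fin n) (Fin n) ℂ)) lam - Nc).det = 0 := by
    by_contra h
    exact hlam' ((Matrix.isUnit_iff_isUnit_det _).mpr (isUnit_iff_ne_zero.mpr h))
  obtain ⟨v, hv0, hv⟩ := (Matrix.exists_mulVec_eq_zero_iff).mpr hdet0
  have hNv : Nc.mulVec v = lam • v := by
    rw [Matrix.sub_mulVec] at hv
    have h2 : ((algebraMap ℂ (Matrix (Fin n) (Fin n) ℂ)) lam).mulVec v = lam • v := by
      rw [Algebra.algebraMap_eq_smul_one, Matrix.smul_mulVec, Matrix.one_mulVec]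
    rw [h2] at hv
    linear_combination (norm := module) -hv
  set μ : ℂ := 1 - (s : ℂ)⁻¹ * lam with hμ_def
  have hTc : T.map (Complex.ofReal ·) = 1 - (s : ℂ)⁻¹ • Nc := by
    ext i j
    by_cases h : i = j <;>
      simp [hT_def, hNc_def, Matrix.map_apply, Matrix.sub_apply, Matrix.smul_apply,
        Matrix.one_apply, h] <;> push_cast <;> ring
  have hTv : (T.map (Complex.ofReal ·)).mulVec v = μ • v := by
    rw [hTc, Matrix.sub_mulVec, Matrix.one_mulVec, Matrix.smul_mulVec, hNv]
    ext i
    simp [hμ_def, Pi.smul_apply, smul_eq_mul]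
    ring
  have hTkv : ∀ k : ℕ, ((T.map (Complex.ofReal ·)) ^ k).mulVec v = μ ^ k • v := by
    intro k
    induction k with
    | zero => simp
    | succ k ih =>
      rw [pow_succ, ← Matrix.mulVec_mulVec, hTv, Matrix.mulVec_smul, ih, smul_smul, pow_succ,
        mul_comm]
  obtain ⟨i0, hi0⟩ : ∃ i, v i ≠ 0 := Function.ne_iff.mp hv0
  -- entry convergence
  have hconv : Filter.Tendsto (fun k => (((T.map (Complex.ofReal ·)) ^ k).mulVec v) i0)
      Filter.atTop (nhds 0) := by
    have : ∀ k : ℕ, (((T.map (Complex.ofReal ·)) ^ k).mulVec v) i0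
        = ∑ j, ((T ^ k) i0 j : ℂ) * v j := by
      intro k
      rw [← cmapPow]
      simp [Matrix.mulVec, dotProduct, Matrix.map_apply]
    simp only [this]
    have h0 : (0 : ℂ) = ∑ j : Fin n, (0 : ℂ) * v j := by simp
    rw [h0]
    refine tendsto_finset_sum _ fun j _ => ?_
    have h1 : Filter.Tendsto (fun k => ((T ^ k) i0 j : ℂ)) Filter.atTop (nhds 0) := by
      have := (hto0 i0 j).ofReal
      simpa using this
    exact h1.mul_const _
  have hμk : Filter.Tendsto (fun k => μ ^ k) Filter.atTop (nhds 0) := by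
    have h1 : Filter.Tendsto (fun k => μ ^ k * v i0) Filter.atTop (nhds 0) := by
      have := hconv
      simp only [hTkv, Pi.smul_apply, smul_eq_mul] at this
      exact this
    have := h1.mul_const (v i0)⁻¹
    simp only [mul_assoc, mul_inv_cancel₀ hi0, mul_one, zero_mul] at this
    exact this
  have hμlt : ‖μ‖ < 1 := by
    by_contra h
    push_neg at h
    have h1 : ∀ k : ℕ, (1 : ℝ) ≤ ‖μ ^ k‖ := by
      intro k
      rw [norm_pow]
      exact one_le_pow₀ h
    have h2 : Filter.Tendsto (fun k => ‖μ ^ k‖) Filter.atTop (nhds 0) := by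
      have := hμk.norm
      simpa using this
    have h3 : ∀ᶠ k in Filter.atTop, ‖μ ^ k‖ < 1 :=
      h2.eventually (eventually_lt_nhds zero_lt_one) |>.mono fun k hk => by
        simpa using hk
    obtain ⟨k, hk⟩ := h3.exists
    exact absurd (h1 k) (not_le.mpr hk)
  -- conclude
  have hlam_eq : lam = (s : ℂ) * (1 - μ) := by
    have hs0 : (s : ℂ) ≠ 0 := by exact_mod_cast hs.ne'
    rw [hμ_def]
    field_simp
    ring
  have hre : lam.re = s * (1 - μ.re) := by
    rw [hlam_eq]
    simp [Complex.mul_re, Complex.ofReal_re, Complex.ofReal_im, Complex.sub_re]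
  rw [hre]
  have : μ.re < 1 := lt_of_le_of_lt (Complex.re_le_norm μ) hμlt
  nlinarith


end Aux

/-- The spectral radius of a real square matrix (via its complex spectrum). -/
noncomputable def specRad {n : ℕ} (M : Matrix (Fin n) (Fin n) ℝ) : ℝ≥0∞ :=
  spectralRadius ℂ (M.map (Complex.ofReal ·))

theorem stmt_16 (n : ℕ) (N : Matrix (Fin n) (Fin n) ℝ)
    (hNunit : IsUnit N) (hNinv : ∀ i j, 0 ≤ N⁻¹ i j)
    (hoff : ∀ i j, i ≠ j → N i j ≤ 0) :
    IsUnit (N + 1) ∧ specRad ((1 - N) * (N + 1)⁻¹) < 1 := by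
  have hkey := key N hNunit hNinv hoff
  set Nc := N.map (Complex.ofReal ·) with hNc_def
  -- (Nc + 1) is a unit
  have hcmapAdd : ((N + 1).map (Complex.ofReal ·)) = Nc + 1 := by
    ext i j
    by_cases h : i = j <;>
      simp [hNc_def, Matrix.map_apply, Matrix.add_apply, Matrix.one_apply, h]
  have hNc1 : IsUnit (Nc + 1) := by
    by_contra h
    have hspec : (-1 : ℂ) ∈ spectrum ℂ Nc := by
      rw [spectrum.mem_iff]
      intro hu
      apply h
      have heq : (algebraMap ℂ (Matrix (Fin n) (Fin n) ℂ)) (-1) - Nc = -(Nc + 1) := by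
        rw [RingHom.map_neg, RingHom.map_one]
        abel
      rw [heq] at hu
      simpa using hu.neg
    have := hkey _ hspec
    norm_num at this
  -- (N + 1) is a unit (real)
  have hN1 : IsUnit (N + 1) := by
    rw [Matrix.isUnit_iff_isUnit_det, isUnit_iff_ne_zero]
    intro h
    have : (Nc + 1).det = 0 := by
      rw [← hcmapAdd]
      have : ((N + 1).map (Complex.ofReal ·)).det = ((N + 1).det : ℂ) :=
        (Complex.ofRealHom.map_det (N + 1)).symm
      rw [this, h, Complex.ofReal_zero]
    have hu := (Matrix.isUnit_iff_isUnit_det _).mp hNc1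
    rw [this] at hu
    simp at hu
  refine ⟨hN1, ?_⟩
  -- complexify the matrix
  have hdet1 : IsUnit (Nc + 1).det := (Matrix.isUnit_iff_isUnit_det _).mp hNc1
  set R : Matrix (Fin n) (Fin n) ℂ := (Nc + 1)⁻¹ with hR_def
  have hCc : ((1 - N) * (N + 1)⁻¹).map (Complex.ofReal ·) = (1 - Nc) * R := by
    rw [cmapMul, mapInv hN1, hcmapAdd]
    congr 1
    ext i j
    by_cases h : i = j <;>
      simp [hNc_def, Matrix.map_apply, Matrix.sub_apply, Matrix.one_apply, h]
  have hmulR : (Nc + 1) * R = 1 := Matrix.mul_nonsing_inv _ hdet1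
  have hCR : (1 - Nc) * R = (2 : ℂ) • R - 1 := by
    have h1 : (1 - Nc) = (2 : ℂ) • (1 : Matrix (Fin n) (Fin n) ℂ) - (Nc + 1) := by
      rw [two_smul]; abel
    rw [h1, sub_mul, Matrix.smul_mul, one_mul, hmulR]
  -- polynomial spectral mapping
  set q : Polynomial ℂ := Polynomial.C 2 * Polynomial.X + Polynomial.C (-1) with hq_def
  have haeval : Polynomial.aeval R q = (2 : ℂ) • R - 1 := by
    rw [hq_def, map_add, _root_.map_mul, Polynomial.aeval_C, Polynomial.aeval_X,
      Polynomial.aeval_C, Algebra.algebraMap_eq_smul_one, Algebra.algebraMap_eq_smul_one,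
      smul_mul_assoc, one_mul, neg_smul, one_smul]
    abel
  have hdeg : 0 < q.degree := by
    rw [hq_def, Polynomial.degree_linear (two_ne_zero)]
    norm_num
  have hspecmap := spectrum.map_polynomial_aeval_of_degree_pos R q hdeg
  rw [haeval] at hspecmap
  -- every element of the spectrum has norm < 1
  have hlt : ∀ z ∈ spectrum ℂ ((1 - Nc) * R), ‖z‖ < 1 := by
    intro z hz
    rw [hCR, hspecmap] at hz
    obtain ⟨w, hw, rfl⟩ := hz
    -- w ∈ σ R, R = inverse of the unit Nc + 1
    set u : (Matrix (Fin n) (Fin n) ℂ)ˣ := hNc1.unit with hu_def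
    have hu_coe : (u : Matrix (Fin n) (Fin n) ℂ) = Nc + 1 := hNc1.unit_spec
    have huinv : ((u⁻¹ : (Matrix (Fin n) (Fin n) ℂ)ˣ) : Matrix (Fin n) (Fin n) ℂ) = R := by
      rw [Matrix.coe_units_inv, hu_coe]
    have hwR : w ∈ spectrum ℂ ((u⁻¹ : (Matrix (Fin n) (Fin n) ℂ)ˣ) : Matrix (Fin n) (Fin n) ℂ) := by
      rw [huinv]; exact hw
    have hw0 : w ≠ 0 := spectrum.ne_zero_of_mem_of_unit hwR
    have hwinv : w⁻¹ ∈ spectrum ℂ ((u : Matrix (Fin n) (Fin n) ℂ)) := by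
      have := (spectrum.inv_mem_iff (r := (Units.mk0 w hw0)⁻¹) (a := u)).mpr
      simp only [inv_inv, Units.val_inv_eq_inv_val, Units.val_mk0] at this ⊢
      exact this hwR
    -- shift to get an eigenvalue of Nc
    set lam : ℂ := w⁻¹ - 1 with hlam_def
    have hlamspec : lam ∈ spectrum ℂ Nc := by
      have h1 : (u : Matrix (Fin n) (Fin n) ℂ) = (algebraMap ℂ (Matrix (Fin n) (Fin n) ℂ)) 1 + Nc := by
        rw [RingHom.map_one, hu_coe]; abel
      rw [h1] at hwinv
      have h2 : w⁻¹ = lam + 1 := by rw [hlam_def]; ring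
      rw [h2] at hwinv
      exact (spectrum.add_mem_add_iff).mp hwinv
    have hre : 0 < lam.re := hkey lam hlamspec
    -- now the norm computation
    have hlam1 : lam + 1 ≠ 0 := by
      intro h
      have : (lam + 1).re = 0 := by rw [h]; simp
      simp only [Complex.add_re, Complex.one_re] at this
      linarith
    have hwval : w = (lam + 1)⁻¹ := by
      have : w⁻¹ = lam + 1 := by rw [hlam_def]; ring
      rw [← this, inv_inv]
    have hzval : Polynomial.eval w q = (1 - lam) * (lam + 1)⁻¹ := by
      rw [hq_def, hwval]
      simp only [Polynomial.eval_add, Polynomial.eval_mul, Polynomial.eval_C, Polynomial.eval_X]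
      field_simp
      ring
    show ‖Polynomial.eval w q‖ < 1
    rw [hzval, norm_mul, norm_inv, ← div_eq_mul_inv]
    have hnormlt : ‖1 - lam‖ < ‖lam + 1‖ := by
      have h1 : Complex.normSq (1 - lam) < Complex.normSq (lam + 1) := by
        simp only [Complex.normSq_apply, Complex.sub_re, Complex.sub_im, Complex.add_re,
          Complex.add_im, Complex.one_re, Complex.one_im]
        nlinarith
      have h2 : ‖(1 : ℂ) - lam‖ ^ 2 < ‖lam + 1‖ ^ 2 := by
        rw [← Complex.sq_norm, ← Complex.sq_norm] at h1
        simpa using h1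
      nlinarith [norm_nonneg ((1:ℂ) - lam), norm_nonneg (lam + 1)]
    have hpos : 0 < ‖lam + 1‖ := norm_pos_iff.mpr hlam1
    rw [div_lt_one hpos]
    exact hnormlt
  -- conclude about the spectral radius
  show spectralRadius ℂ (((1 - N) * (N + 1)⁻¹).map (Complex.ofReal ·)) < 1
  rw [hCc]
  have hfin : (spectrum ℂ ((1 - Nc) * R)).Finite := Matrix.finite_spectrum _
  rcases (spectrum ℂ ((1 - Nc) * R)).eq_empty_or_nonempty with hemp | hne
  · simp only [spectralRadius, hemp]
    simp
  · have himg : ((fun k => (‖k‖₊ : ℝ≥0∞)) '' spectrum ℂ ((1 - Nc) * R)).Nonempty :=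
      hne.image _
    have himgfin := hfin.image (fun k => (‖k‖₊ : ℝ≥0∞))
    obtain ⟨k0, hk0, hk0eq⟩ := himg.csSup_mem himgfin
    have heq : spectralRadius ℂ ((1 - Nc) * R)
        = sSup ((fun k => (‖k‖₊ : ℝ≥0∞)) '' spectrum ℂ ((1 - Nc) * R)) := by
      simp only [spectralRadius, sSup_image]
    rw [heq, ← hk0eq]
    show (‖k0‖₊ : ℝ≥0∞) < 1
    have h0 := hlt k0 hk0
    have h1 : ‖k0‖₊ < 1 := by
      rw [← NNReal.coe_lt_coe]
      simpa using h0
    exact_mod_cast h1
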